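/- Correctness of the Σ₂-saturation: let α: (A^+, A^∞) → (S_+, S_∞) be an alphabet-compatible morphism into a finite ω-semigroup. If (r₁,r₂) ∈ C_{2,2}[α_+], (s₁,s₂) ∈ C_{2,2}[α_+], t₂ ∈ α(A^∞) and alph(s₁) = alph(t₂), then (r₁(s₁)^∞, r₂(s₂)^ω t₂) ∈ C_{2,2}[α_∞]; that is, for every k ≥ 1 there exist ω-words w₁ ≲_{2,k} w₂ with α(w₁) = r₁(s₁)^∞ and α(w₂) = r₂(s₂)^ω t₂. -/

import Mathlib

namespace QAH

/-- Quantifier-free first-order formulas over letter predicates and `<`,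
with variables as de Bruijn-style indices into a valuation. -/
inductive QF (A : Type) : Type
  | tru : QF A
  | letter : A → ℕ → QF A
  | lt : ℕ → ℕ → QF A
  | not : QF A → QF A
  | or : QF A → QF A → QF A

/-- Prenex first-order formulas: a quantifier prefix over a quantifier-free matrix. -/
inductive Prenex (A : Type) : Type
  | qf : QF A → Prenex A
  | ex : Prenex A → Prenex A
  | all : Prenex A → Prenex A

variable {A : Type}

/-- Quantifier rank (for a prenex formula: the number of quantifiers). -/
def Prenex.rank : Prenex A → ℕ
  | .qf _ => 0
  | .ex φ => φ.rank + 1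
  | .all φ => φ.rank + 1

def QF.ClosedUnder (n : ℕ) : QF A → Prop
  | .tru => True
  | .letter _ x => x < n
  | .lt x y => x < n ∧ y < n
  | .not φ => φ.ClosedUnder n
  | .or φ ψ => φ.ClosedUnder n ∧ ψ.ClosedUnder n

def Prenex.ClosedUnder : ℕ → Prenex A → Prop
  | n, .qf φ => φ.ClosedUnder n
  | n, .ex φ => φ.ClosedUnder (n+1)
  | n, .all φ => φ.ClosedUnder (n+1)

/-- A sentence: no free variables. -/
def Prenex.Closed (φ : Prenex A) : Prop := φ.ClosedUnder 0

/-- `(φ.levels).1` is the least `i` such that `φ` is a `Σᵢ` formula (at most `i`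
alternating quantifier blocks, starting with `∃`, or fewer blocks), and
`(φ.levels).2` the least `i` such that `φ` is a `Πᵢ` formula. -/
def Prenex.levels : Prenex A → ℕ × ℕ
  | .qf _ => (0, 0)
  | .ex φ => (max (φ.levels).1 1, max (φ.levels).1 1 + 1)
  | .all φ => (max (φ.levels).2 1 + 1, max (φ.levels).2 1)

/-- `φ` is a `Σᵢ` formula. -/
def Prenex.IsSigma (i : ℕ) (φ : Prenex A) : Prop := (φ.levels).1 ≤ i

def consVal {D : Type} (d : D) (val : ℕ → D) : ℕ → D
  | 0 => d
  | n+1 => val n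

def QF.Sat {D : Type} [LT D] (w : D → A) (val : ℕ → D) : QF A → Prop
  | .tru => True
  | .letter a x => w (val x) = a
  | .lt x y => val x < val y
  | .not φ => ¬ QF.Sat w val φ
  | .or φ ψ => QF.Sat w val φ ∨ QF.Sat w val ψ

def Prenex.Sat {D : Type} [LT D] (w : D → A) : (ℕ → D) → Prenex A → Prop
  | val, .qf φ => φ.Sat w val
  | val, .ex φ => ∃ d : D, Prenex.Sat w (consVal d val) φ
  | val, .all φ => ∀ d : D, Prenex.Sat w (consVal d val) φ

/-- Satisfaction of a sentence by a finite word (positions `Fin u.length`). -/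
def SatFin (u : List A) (φ : Prenex A) : Prop :=
  ∀ val : ℕ → Fin u.length, φ.Sat u.get val

/-- Satisfaction of a sentence by an ω-word (positions `ℕ`). -/
def SatInf (w : ℕ → A) (φ : Prenex A) : Prop :=
  ∀ val : ℕ → ℕ, φ.Sat w val

/-- `u ≲_{i,k} v` on finite words: every `Σᵢ` sentence of quantifier rank at most `k`
satisfied by `u` is satisfied by `v`. -/
def leFin (i k : ℕ) (u v : List A) : Prop :=
  ∀ φ : Prenex A, φ.Closed → φ.IsSigma i → φ.rank ≤ k → SatFin u φ → SatFin v φ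

/-- `u ≲_{i,k} v` on ω-words. -/
def leInf (i k : ℕ) (u v : ℕ → A) : Prop :=
  ∀ φ : Prenex A, φ.Closed → φ.IsSigma i → φ.rank ≤ k → SatInf u φ → SatInf v φ

/-- `u ≡_{i,k} v` : mutual `≲_{i,k}`. -/
def equivFin (i k : ℕ) (u v : List A) : Prop := leFin i k u v ∧ leFin i k v u

def equivInf (i k : ℕ) (u v : ℕ → A) : Prop := leInf i k u v ∧ leInf i k v u

/-- Concatenation of a finite word to the left of an ω-word. -/
def catInf (u : List A) (v : ℕ → A) : ℕ → A :=
  fun n => if h : n < u.length then u.get ⟨n, h⟩ else v (n - u.length)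

/-- The ω-word `u^∞ = uuu⋯`. -/
def wpow (u : List A) (hu : u ≠ []) : ℕ → A :=
  fun n => u.get ⟨n % u.length, Nat.mod_lt n (List.length_pos_of_ne_nil hu)⟩

/-- The finite word `u^ℓ`. -/
def fpow (u : List A) (ℓ : ℕ) : List A := (List.replicate ℓ u).flatten

/-- The alphabet (set of letters) of a finite word. -/
def alphFin (u : List A) : Set A := {a | a ∈ u}

/-- The alphabet of an ω-word. -/
def alphInf (w : ℕ → A) : Set A := {a | ∃ n, w n = a}


/-! ### Definability and separation -/

/-- `K` is defined (within `A^+`) by a closed `Σᵢ` sentence. -/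
def SigmaDefFin (i : ℕ) (K : Set (List A)) : Prop :=
  ∃ φ : Prenex A, φ.Closed ∧ φ.IsSigma i ∧ K = {u | u ≠ [] ∧ SatFin u φ}

/-- `K` is defined by a closed `Σᵢ` sentence (ω-words). -/
def SigmaDefInf (i : ℕ) (K : Set (ℕ → A)) : Prop :=
  ∃ φ : Prenex A, φ.Closed ∧ φ.IsSigma i ∧ K = {w | SatInf w φ}

/-- `K` separates `L₁` from `L₂`. -/
def Separates {X : Type} (K L₁ L₂ : Set X) : Prop := L₁ ⊆ K ∧ K ∩ L₂ = ∅

/-- Boolean combinations (relative to the universe `U`) of sets satisfying `G`. -/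
inductive BoolComb {X : Type} (U : Set X) (G : Set X → Prop) : Set X → Prop
  | base (K : Set X) (h : G K) : BoolComb U G K
  | compl (K : Set X) (h : BoolComb U G K) : BoolComb U G (U \ K)
  | union (K K' : Set X) (h : BoolComb U G K) (h' : BoolComb U G K') : BoolComb U G (K ∪ K')

/-- `K ⊆ A^+` is `BΣᵢ`-definable: a Boolean combination of `Σᵢ`-definable languages. -/
def BSigmaDefFin (i : ℕ) (K : Set (List A)) : Prop :=
  BoolComb {u : List A | u ≠ []} (SigmaDefFin i) K

def BSigmaDefInf (i : ℕ) (K : Set (ℕ → A)) : Prop :=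
  BoolComb Set.univ (SigmaDefInf i) K

/-! ### Semigroups and ω-semigroups -/

/-- `mpow mul s n` is `s^(n+1)`: the `(n+1)`-fold product of `s`. -/
def mpow {S : Type} (mul : S → S → S) (s : S) : ℕ → S
  | 0 => s
  | n+1 => mul (mpow mul s n) s

/-- `segProd mul f a n` is the product `f a * f (a+1) * ⋯ * f (a+n)`. -/
def segProd {S : Type} (mul : S → S → S) (f : ℕ → S) (a : ℕ) : ℕ → S
  | 0 => f a
  | n+1 => mul (segProd mul f a n) (f (a + n + 1))

/-- An ω-semigroup `(S₊, S_∞)`: a semigroup `S₊`, a mixed product and an infinite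
product, satisfying all forms of associativity. -/
structure OmegaSG (Sp Si : Type) where
  mul : Sp → Sp → Sp
  act : Sp → Si → Si
  iprod : (ℕ → Sp) → Si
  mul_assoc : ∀ a b c, mul (mul a b) c = mul a (mul b c)
  act_assoc : ∀ a b x, act (mul a b) x = act a (act b x)
  act_iprod : ∀ f : ℕ → Sp, act (f 0) (iprod fun n => f (n+1)) = iprod f
  iprod_group : ∀ (f : ℕ → Sp) (c : ℕ → ℕ), StrictMono c → c 0 = 0 →
    iprod (fun n => segProd mul f (c n) (c (n+1) - c n - 1)) = iprod f

/-- `s^∞`: the infinite product `sss⋯`. -/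
def OmegaSG.ipow {Sp Si : Type} (M : OmegaSG Sp Si) (s : Sp) : Si := M.iprod fun _ => s

/-- The set `C_{2,2}[α₊]` of `Σ₂`-chains of length 2 for `α₊ : A⁺ → S₊`. -/
def C22Fin {Sp : Type} (αp : List A → Sp) : Set (Sp × Sp) :=
  {p | ∀ k, 1 ≤ k → ∃ x y : List A, x ≠ [] ∧ y ≠ [] ∧
      αp x = p.1 ∧ αp y = p.2 ∧ leFin 2 k x y}

/-- The set `C_{2,2}[α_∞]` of `Σ₂`-chains of length 2 for `α_∞ : A^∞ → S_∞`. -/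
def C22Inf {Si : Type} (αi : (ℕ → A) → Si) : Set (Si × Si) :=
  {p | ∀ k, 1 ≤ k → ∃ w₁ w₂ : ℕ → A,
      αi w₁ = p.1 ∧ αi w₂ = p.2 ∧ leInf 2 k w₁ w₂}

/-- The alphabet of `s ∈ S₊` (well defined when `α` is alphabet compatible). -/
def alphS {Sp : Type} (αp : List A → Sp) (s : Sp) : Set A :=
  {a | ∃ u : List A, u ≠ [] ∧ αp u = s ∧ a ∈ u}

/-- The alphabet of `t ∈ S_∞`. -/
def alphSi {Si : Type} (αi : (ℕ → A) → Si) (t : Si) : Set A :=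
  {a | ∃ w : ℕ → A, αi w = t ∧ ∃ n, w n = a}

/-- Multiplication on `S₊¹ = S₊ ∪ {1}` by an element of `S₊` (`none` is the neutral element). -/
def mul1 {Sp Si : Type} (M : OmegaSG Sp Si) : Option Sp → Sp → Sp
  | none, s => s
  | some t, s => M.mul t s

/-- The `B`-labeled edge relation of the graph `G[α]` associated to `α`:
`(s₊, s_∞) →_B (t₊, t_∞)` iff there are `(p₁,p₂), (q₁,q₂) ∈ C₂[α₊]` and `q ∈ α(A⁺)`
with `alph p₁ = alph q₁ = alph q = B`, `s₊ p₁ (q₁)^∞ = s_∞` and `s₊ p₂ (q₂)^ω q = t₊`.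
Here `e` is such that `x ↦ mpow M.mul x e = x^(e+1) = x^ω` is the idempotent power. -/
def Edge {Sp Si : Type} (M : OmegaSG Sp Si) (αp : List A → Sp) (e : ℕ) (B : Set A)
    (n m : Option Sp × Si) : Prop :=
  ∃ p₁ p₂ q₁ q₂ qq : Sp,
    (p₁, p₂) ∈ C22Fin αp ∧ (q₁, q₂) ∈ C22Fin αp ∧ (∃ u : List A, u ≠ [] ∧ αp u = qq) ∧
    alphS αp p₁ = B ∧ alphS αp q₁ = B ∧ alphS αp qq = B ∧
    M.act (mul1 M n.1 p₁) (M.ipow q₁) = n.2 ∧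
    m.1 = some (M.mul (mul1 M n.1 p₂) (M.mul (mpow M.mul q₂ e) qq))


variable {A : Type}

/-! ### Iterated quantifiers -/

def exIter : ℕ → Prenex A → Prenex A
  | 0, φ => φ
  | n+1, φ => .ex (exIter n φ)

def allIter : ℕ → Prenex A → Prenex A
  | 0, φ => φ
  | n+1, φ => .all (allIter n φ)

lemma rank_exIter (n : ℕ) (φ : Prenex A) : (exIter n φ).rank = n + φ.rank := by
  induction n with
  | zero => simp [exIter]
  | succ n ih => simp [exIter, Prenex.rank, ih]; omega

lemma rank_allIter (n : ℕ) (φ : Prenex A) : (allIter n φ).rank = n + φ.rank := by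
  induction n with
  | zero => simp [allIter]
  | succ n ih => simp [allIter, Prenex.rank, ih]; omega

lemma closed_exIter (n m : ℕ) (φ : Prenex A) :
    (exIter n φ).ClosedUnder m ↔ φ.ClosedUnder (m + n) := by
  induction n generalizing m with
  | zero => simp [exIter]
  | succ n ih =>
      have h1 : (exIter (n+1) φ).ClosedUnder m ↔ (exIter n φ).ClosedUnder (m+1) := Iff.rfl
      rw [h1, ih (m+1), show m + 1 + n = m + (n+1) by omega]

lemma closed_allIter (n m : ℕ) (φ : Prenex A) :
    (allIter n φ).ClosedUnder m ↔ φ.ClosedUnder (m + n) := by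
  induction n generalizing m with
  | zero => simp [allIter]
  | succ n ih =>
      have h1 : (allIter (n+1) φ).ClosedUnder m ↔ (allIter n φ).ClosedUnder (m+1) := Iff.rfl
      rw [h1, ih (m+1), show m + 1 + n = m + (n+1) by omega]

lemma levels_allIter_qf (b : ℕ) (ψ : QF A) :
    (allIter b (.qf ψ)).levels.2 ≤ 1 ∧ (allIter b (.qf ψ)).levels.1 ≤ 2 := by
  induction b with
  | zero => simp [allIter, Prenex.levels]
  | succ b ih =>
      show ((Prenex.all (allIter b (.qf ψ))).levels.2 ≤ 1 ∧
        (Prenex.all (allIter b (.qf ψ))).levels.1 ≤ 2)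
      simp only [Prenex.levels]
      omega

lemma isSigma2_exIter (a : ℕ) (φ : Prenex A) (h : φ.levels.1 ≤ 2) :
    (exIter a φ).levels.1 ≤ 2 := by
  induction a with
  | zero => simpa [exIter]
  | succ a ih =>
      show (Prenex.ex (exIter a φ)).levels.1 ≤ 2
      simp only [Prenex.levels]
      omega

lemma pi1_shape (φ : Prenex A) (h : φ.levels.2 ≤ 1) :
    ∃ b ψ, φ = allIter b (.qf ψ) := by
  induction φ with
  | qf ψ => exact ⟨0, ψ, rfl⟩
  | ex χ ih => simp [Prenex.levels] at h
  | all χ ih =>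
      simp only [Prenex.levels] at h
      obtain ⟨b, ψ, rfl⟩ := ih (by omega)
      exact ⟨b+1, ψ, rfl⟩

lemma sigma2_shape (φ : Prenex A) (h : φ.IsSigma 2) :
    ∃ a b ψ, φ = exIter a (allIter b (.qf ψ)) := by
  induction φ with
  | qf ψ => exact ⟨0, 0, ψ, rfl⟩
  | ex χ ih =>
      simp only [Prenex.IsSigma, Prenex.levels] at h ⊢
      obtain ⟨a, b, ψ, rfl⟩ := ih (by simp only [Prenex.IsSigma]; omega)
      exact ⟨a+1, b, ψ, rfl⟩
  | all χ ih =>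
      simp only [Prenex.IsSigma, Prenex.levels] at h
      obtain ⟨b, ψ, rfl⟩ := pi1_shape χ (by omega)
      exact ⟨0, b+1, ψ, rfl⟩

/-! ### Tuple-style satisfaction -/

def prepend {D : Type} (n : ℕ) (t : Fin n → D) (val : ℕ → D) : ℕ → D :=
  fun i => if h : i < n then t ⟨i, h⟩ else val (i - n)

def mySnoc {D : Type} (n : ℕ) (t : Fin n → D) (d : D) : Fin (n+1) → D :=
  fun i => if h : (i : ℕ) < n then t ⟨i, h⟩ else d

lemma prepend_consVal {D : Type} (n : ℕ) (t : Fin n → D) (d : D) (val : ℕ → D) :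
    prepend n t (consVal d val) = prepend (n+1) (mySnoc n t d) val := by
  funext i
  simp only [prepend, mySnoc]
  rcases lt_trichotomy i n with h | h | h
  · rw [dif_pos h, dif_pos (by omega)]
    rw [dif_pos (by simpa using h)]
  · subst h
    rw [dif_neg (by omega), dif_pos (by omega), dif_neg (by simp)]
    simp [consVal]
  · rw [dif_neg (by omega), dif_neg (by omega)]
    have : i - n = (i - (n+1)) + 1 := by omega
    rw [this]
    simp [consVal]

lemma mySnoc_eta {D : Type} (n : ℕ) (t' : Fin (n+1) → D) :
    mySnoc n (fun i : Fin n => t' ⟨i, by omega⟩) (t' ⟨n, n.lt_succ_self⟩) = t' := by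
  funext i
  simp only [mySnoc]
  split
  · rfl
  · next h => congr 1; exact Fin.ext (by have := i.isLt; simp; omega)

lemma exists_snoc_iff {D : Type} (n : ℕ) (P : (Fin (n+1) → D) → Prop) :
    (∃ d : D, ∃ t : Fin n → D, P (mySnoc n t d)) ↔ ∃ t' : Fin (n+1) → D, P t' := by
  constructor
  · rintro ⟨d, t, h⟩; exact ⟨_, h⟩
  · rintro ⟨t', h⟩
    exact ⟨t' ⟨n, n.lt_succ_self⟩, fun i => t' ⟨i, by omega⟩, by rw [mySnoc_eta]; exact h⟩

lemma forall_snoc_iff {D : Type} (n : ℕ) (P : (Fin (n+1) → D) → Prop) :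
    (∀ d : D, ∀ t : Fin n → D, P (mySnoc n t d)) ↔ ∀ t' : Fin (n+1) → D, P t' := by
  constructor
  · intro h t'
    have := h (t' ⟨n, n.lt_succ_self⟩) (fun i => t' ⟨i, by omega⟩)
    rwa [mySnoc_eta] at this
  · intro h d t; exact h _

lemma sat_exIter {D : Type} [LT D] (w : D → A) (n : ℕ) (φ : Prenex A) (val : ℕ → D) :
    Prenex.Sat w val (exIter n φ) ↔ ∃ t : Fin n → D, Prenex.Sat w (prepend n t val) φ := by
  induction n generalizing val with
  | zero =>
      simp only [exIter]
      have hp : ∀ t : Fin 0 → D, prepend 0 t val = val := by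
        intro t; funext i; simp [prepend]
      constructor
      · intro h
        exact ⟨fun i => i.elim0, by rw [hp]; exact h⟩
      · rintro ⟨t, h⟩
        rwa [hp] at h
  | succ n ih =>
      show Prenex.Sat w val (.ex (exIter n φ)) ↔ _
      rw [show Prenex.Sat w val (.ex (exIter n φ)) =
        ∃ d : D, Prenex.Sat w (consVal d val) (exIter n φ) from rfl]
      simp only [ih]
      rw [← exists_snoc_iff n (fun t' => Prenex.Sat w (prepend (n+1) t' val) φ)]
      constructor
      · rintro ⟨d, t, h⟩; exact ⟨d, t, by rwa [← prepend_consVal]⟩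
      · rintro ⟨d, t, h⟩; exact ⟨d, t, by rwa [prepend_consVal]⟩

lemma sat_allIter {D : Type} [LT D] (w : D → A) (n : ℕ) (φ : Prenex A) (val : ℕ → D) :
    Prenex.Sat w val (allIter n φ) ↔ ∀ t : Fin n → D, Prenex.Sat w (prepend n t val) φ := by
  induction n generalizing val with
  | zero =>
      simp only [allIter]
      have hp : ∀ t : Fin 0 → D, prepend 0 t val = val := by
        intro t; funext i; simp [prepend]
      constructor
      · intro h t
        rw [hp]; exact h
      · intro h
        have := h (fun i => i.elim0)
        rwa [hp] at this
  | succ n ih =>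
      show Prenex.Sat w val (.all (allIter n φ)) ↔ _
      rw [show Prenex.Sat w val (.all (allIter n φ)) =
        ∀ d : D, Prenex.Sat w (consVal d val) (allIter n φ) from rfl]
      simp only [ih]
      rw [← forall_snoc_iff n (fun t' => Prenex.Sat w (prepend (n+1) t' val) φ)]
      constructor
      · intro h d t; rw [← prepend_consVal]; exact h d t
      · intro h d t; rw [prepend_consVal]; exact h d t

/-! ### Quantifier-free transfer -/

lemma qf_transfer {D D' : Type} [LinearOrder D] [LinearOrder D'] {w : D → A} {w' : D' → A}
    (ψ : QF A) (n : ℕ) (hψ : ψ.ClosedUnder n) (val : ℕ → D) (val' : ℕ → D')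
    (hl : ∀ i, i < n → w (val i) = w' (val' i))
    (ho : ∀ i j, i < n → j < n → (val i < val j ↔ val' i < val' j)) :
    ψ.Sat w val ↔ ψ.Sat w' val' := by
  induction ψ with
  | tru => simp [QF.Sat]
  | letter a x =>
      have hx : x < n := hψ
      show w (val x) = a ↔ w' (val' x) = a
      rw [hl x hx]
  | lt x y =>
      obtain ⟨hx, hy⟩ := hψ
      exact ho x y hx hy
  | not φ ih => exact not_congr (ih hψ)
  | or φ χ ih₁ ih₂ => exact or_congr (ih₁ hψ.1) (ih₂ hψ.2)

/-! ### EF-style Σ₂ dominance -/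

def EFle {D D' : Type} [LT D] [LT D'] (w : D → A) (w' : D' → A) (a b : ℕ) : Prop :=
  ∀ d : Fin a → D, ∃ f : Fin a → D', ∀ e' : Fin b → D', ∃ e : Fin b → D,
    (∀ s : Fin b ⊕ Fin a, w (Sum.elim e d s) = w' (Sum.elim e' f s)) ∧
    (∀ s s' : Fin b ⊕ Fin a,
      Sum.elim e d s < Sum.elim e d s' ↔ Sum.elim e' f s < Sum.elim e' f s')

def slotOf (b a : ℕ) (i : ℕ) (h : i < b + a) : Fin b ⊕ Fin a :=
  if h' : i < b then Sum.inl ⟨i, h'⟩ else Sum.inr ⟨i - b, by omega⟩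

lemma efle_leInf {w₁ w₂ : ℕ → A} (k : ℕ)
    (h : ∀ a b : ℕ, a + b ≤ k → EFle w₁ w₂ a b) : leInf 2 k w₁ w₂ := by
  intro φ hc hs hrk hsat val'
  obtain ⟨a, b, ψ, rfl⟩ := sigma2_shape φ hs
  have hrank : a + b ≤ k := by
    rw [rank_exIter, rank_allIter] at hrk
    simp only [Prenex.rank] at hrk
    omega
  have hψc : ψ.ClosedUnder (b + a) := by
    have := (closed_exIter a 0 _).mp hc
    have := (closed_allIter b (0+a) _).mp this
    have h2 : (0 + a + b) = b + a := by omega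
    rwa [h2] at this
  have hs1 := hsat (fun _ => 0)
  rw [sat_exIter] at hs1
  obtain ⟨t, ht⟩ := hs1
  rw [sat_allIter] at ht
  obtain ⟨f, hf⟩ := h a b hrank t
  rw [sat_exIter]
  refine ⟨f, ?_⟩
  rw [sat_allIter]
  intro s'
  obtain ⟨e, hlet, hord⟩ := hf s'
  have hψ := ht e
  show Prenex.Sat w₂ _ (.qf ψ)
  show ψ.Sat w₂ _
  have hψ' : ψ.Sat w₁ (prepend b e (prepend a t (fun _ => 0))) := hψ
  have key : ∀ i (h : i < b + a),
      prepend b e (prepend a t (fun _ => 0)) i = Sum.elim e t (slotOf b a i h) ∧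
      prepend b s' (prepend a f val') i = Sum.elim s' f (slotOf b a i h) := by
    intro i hi
    simp only [prepend, slotOf]
    by_cases h' : i < b
    · rw [dif_pos h', dif_pos h', dif_pos h']; simp
    · rw [dif_neg h', dif_neg h', dif_neg h']
      rw [dif_pos (by omega), dif_pos (by omega)]
      simp
  exact (qf_transfer ψ (b+a) hψc _ _
    (fun i hi => by rw [(key i hi).1, (key i hi).2]; exact hlet _)
    (fun i j hi hj => by
      rw [(key i hi).1, (key i hi).2, (key j hj).1, (key j hj).2]; exact hord _ _)).mp hψ'
/-! ### Boolean combinations of QF formulas -/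

def conjQF : List (QF A) → QF A
  | [] => .tru
  | φ :: l => .not (.or (.not φ) (.not (conjQF l)))

def disjQF : List (QF A) → QF A
  | [] => .not .tru
  | φ :: l => .or φ (disjQF l)

lemma sat_conjQF {D : Type} [LT D] (w : D → A) (val : ℕ → D) (l : List (QF A)) :
    (conjQF l).Sat w val ↔ ∀ φ ∈ l, φ.Sat w val := by
  induction l with
  | nil => simp [conjQF, QF.Sat]
  | cons φ l ih =>
      show ¬(¬φ.Sat w val ∨ ¬(conjQF l).Sat w val) ↔ _
      rw [not_or, not_not, not_not, ih]
      simp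

lemma sat_disjQF {D : Type} [LT D] (w : D → A) (val : ℕ → D) (l : List (QF A)) :
    (disjQF l).Sat w val ↔ ∃ φ ∈ l, φ.Sat w val := by
  induction l with
  | nil => simp [disjQF, QF.Sat]
  | cons φ l ih =>
      show φ.Sat w val ∨ (disjQF l).Sat w val ↔ _
      rw [ih]
      simp

lemma closed_conjQF (n : ℕ) (l : List (QF A)) (h : ∀ φ ∈ l, φ.ClosedUnder n) :
    (conjQF l).ClosedUnder n := by
  induction l with
  | nil => trivial
  | cons φ l ih =>
      exact ⟨h φ (by simp), ih fun ψ hψ => h ψ (by simp [hψ])⟩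

lemma closed_disjQF (n : ℕ) (l : List (QF A)) (h : ∀ φ ∈ l, φ.ClosedUnder n) :
    (disjQF l).ClosedUnder n := by
  induction l with
  | nil => trivial
  | cons φ l ih =>
      exact ⟨h φ (by simp), ih fun ψ hψ => h ψ (by simp [hψ])⟩

/-! ### Type formulas -/

def typeList {D : Type} [LinearOrder D] (wD : D → A) (n : ℕ) (p : Fin n → D) : List (QF A) :=
  ((List.finRange n).map fun i => QF.letter (wD (p i)) i) ++
    ((List.finRange n).flatMap fun i => (List.finRange n).map fun j =>
      if p i < p j then QF.lt i j else .not (.lt i j))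

lemma closed_typeList {D : Type} [LinearOrder D] (wD : D → A) (n : ℕ) (p : Fin n → D) :
    ∀ φ ∈ typeList wD n p, φ.ClosedUnder n := by
  intro φ hφ
  simp only [typeList, List.mem_append, List.mem_map, List.mem_flatMap] at hφ
  rcases hφ with ⟨i, _, rfl⟩ | ⟨i, _, j, _, rfl⟩
  · exact i.isLt
  · split <;> exact ⟨i.isLt, j.isLt⟩

lemma sat_typeList {D D' : Type} [LinearOrder D] [LinearOrder D']
    (wD : D → A) (w' : D' → A) (n : ℕ) (p : Fin n → D) (q : Fin n → D')
    (val' : ℕ → D') (hq : ∀ i : Fin n, val' i = q i) :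
    ((conjQF (typeList wD n p)).Sat w' val') ↔
      ((∀ i, w' (q i) = wD (p i)) ∧ ∀ i j, p i < p j ↔ q i < q j) := by
  rw [sat_conjQF]
  constructor
  · intro h
    constructor
    · intro i
      have := h (QF.letter (wD (p i)) i)
        (by simp only [typeList, List.mem_append]; left
            exact List.mem_map.mpr ⟨i, List.mem_finRange i, rfl⟩)
      show _ = _
      rw [← hq i]
      exact this
    · intro i j
      have := h (if p i < p j then QF.lt (i:ℕ) j else .not (.lt (i:ℕ) j))
        (by simp only [typeList, List.mem_append]; right
            exact List.mem_flatMap.mpr ⟨i, List.mem_finRange i,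
              List.mem_map.mpr ⟨j, List.mem_finRange j, rfl⟩⟩)
      by_cases hpp : p i < p j
      · rw [if_pos hpp] at this
        have h2 : val' i < val' j := this
        rw [hq i, hq j] at h2
        exact iff_of_true hpp h2
      · rw [if_neg hpp] at this
        have h2 : ¬ (val' (i:ℕ) < val' (j:ℕ)) := this
        rw [hq i, hq j] at h2
        exact iff_of_false hpp h2
  · rintro ⟨hl, ho⟩ φ hφ
    simp only [typeList, List.mem_append, List.mem_map, List.mem_flatMap] at hφ
    rcases hφ with ⟨i, _, rfl⟩ | ⟨i, _, j, hj, rfl⟩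
    · show w' (val' i) = wD (p i)
      rw [hq i]; exact hl i
    · by_cases hpp : p i < p j
      · rw [if_pos hpp]
        show val' (i:ℕ) < val' (j:ℕ)
        rw [hq i, hq j]
        exact (ho i j).mp hpp
      · rw [if_neg hpp]
        show ¬ (val' (i:ℕ) < val' (j:ℕ))
        rw [hq i, hq j]
        exact fun hc => hpp ((ho i j).mpr hc)
/-! ### Extraction: leFin implies EFle -/

def combT {X : Type} {b a : ℕ} (e : Fin b → X) (d : Fin a → X) : Fin (b + a) → X :=
  fun i => if h : (i : ℕ) < b then e ⟨i, h⟩ else d ⟨(i : ℕ) - b, by have := i.isLt; omega⟩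

def toIdx {b a : ℕ} : Fin b ⊕ Fin a → Fin (b + a) :=
  Sum.elim (fun j => ⟨j, by have := j.isLt; omega⟩) (fun i => ⟨b + i, by have := i.isLt; omega⟩)

lemma combT_toIdx {X : Type} {b a : ℕ} (e : Fin b → X) (d : Fin a → X)
    (s : Fin b ⊕ Fin a) : combT e d (toIdx s) = Sum.elim e d s := by
  rcases s with j | i
  · simp only [toIdx, combT, Sum.elim_inl]
    exact dif_pos j.isLt
  · simp only [toIdx, combT, Sum.elim_inr]
    refine (dif_neg (show ¬ (b + (i : ℕ) < b) by omega)).trans ?_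
    congr 1
    exact Fin.ext (by simp)

lemma prepend_combT {D : Type} (a b : ℕ) (s : Fin b → D) (t : Fin a → D) (val : ℕ → D)
    (i : Fin (b + a)) : prepend b s (prepend a t val) i = combT s t i := by
  simp only [prepend, combT]
  by_cases h : (i : ℕ) < b
  · rw [dif_pos h, dif_pos h]
  · rw [dif_neg h, dif_neg h, dif_pos (by have := i.isLt; omega)]

lemma leFin_to_EFle (k a b : ℕ) (hab : a + b ≤ k) (u v : List A)
    (hu : 0 < u.length) (hv : 0 < v.length) (h : leFin 2 k u v) :
    EFle u.get v.get a b := by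
  classical
  intro d
  set ψ : QF A := disjQF (((Finset.univ : Finset (Fin b → Fin u.length)).toList).map
    fun e0 => conjQF (typeList u.get (b + a) (combT e0 d))) with hψdef
  set Φ : Prenex A := exIter a (allIter b (.qf ψ)) with hΦdef
  have hclosed : Φ.Closed := by
    rw [Prenex.Closed, hΦdef, closed_exIter, closed_allIter]
    show ψ.ClosedUnder (0 + a + b)
    have : (0 + a + b) = b + a := by omega
    rw [this, hψdef]
    apply closed_disjQF
    intro φ hφ
    simp only [List.mem_map] at hφ
    obtain ⟨e0, _, rfl⟩ := hφ
    exact closed_conjQF _ _ (closed_typeList _ _ _)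
  have hsigma : Φ.IsSigma 2 := by
    rw [Prenex.IsSigma, hΦdef]
    exact isSigma2_exIter a _ (levels_allIter_qf b ψ).2
  have hrank : Φ.rank ≤ k := by
    rw [hΦdef, rank_exIter, rank_allIter]
    simp only [Prenex.rank]
    omega
  have hsatu : SatFin u Φ := by
    intro val
    rw [hΦdef, sat_exIter]
    refine ⟨d, ?_⟩
    rw [sat_allIter]
    intro s
    show ψ.Sat u.get _
    rw [hψdef, sat_disjQF]
    refine ⟨conjQF (typeList u.get (b + a) (combT s d)),
      List.mem_map.mpr ⟨s, Finset.mem_toList.mpr (Finset.mem_univ s), rfl⟩, ?_⟩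
    rw [sat_typeList u.get u.get (b+a) (combT s d) (combT s d) _
      (fun i => prepend_combT a b s d val i)]
    exact ⟨fun i => rfl, fun i j => Iff.rfl⟩
  have hsatv := h Φ hclosed hsigma hrank hsatu
  have hv0 := hsatv (fun _ => ⟨0, hv⟩)
  rw [hΦdef, sat_exIter] at hv0
  obtain ⟨f, hf⟩ := hv0
  refine ⟨f, ?_⟩
  intro e'
  rw [sat_allIter] at hf
  have hf' := hf e'
  rw [show Prenex.Sat v.get (prepend b e' (prepend a f fun _ => ⟨0, hv⟩)) (.qf ψ) =
    ψ.Sat v.get (prepend b e' (prepend a f fun _ => ⟨0, hv⟩)) from rfl, hψdef,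
    sat_disjQF] at hf'
  obtain ⟨φ, hφmem, hφsat⟩ := hf'
  simp only [List.mem_map] at hφmem
  obtain ⟨e0, _, rfl⟩ := hφmem
  rw [sat_typeList u.get v.get (b+a) (combT e0 d) (combT e' f) _
    (fun i => prepend_combT a b e' f _ i)] at hφsat
  obtain ⟨hlet, hord⟩ := hφsat
  refine ⟨e0, ?_, ?_⟩
  · intro s
    have := hlet (toIdx s)
    rw [combT_toIdx, combT_toIdx] at this
    exact this.symm
  · intro s s'
    have := hord (toIdx s) (toIdx s')
    rw [combT_toIdx, combT_toIdx, combT_toIdx, combT_toIdx] at this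
    exact this
/-! ### Word evaluation lemmas -/

lemma blockLt {M q r q' r' : ℕ} (hr : r < M) (hr' : r' < M) :
    q * M + r < q' * M + r' ↔ (q < q' ∨ (q = q' ∧ r < r')) := by
  constructor
  · intro h
    rcases lt_trichotomy q q' with hq | hq | hq
    · exact Or.inl hq
    · subst hq; exact Or.inr ⟨rfl, by omega⟩
    · exfalso
      have : q' * M + r' < q * M := by
        calc q' * M + r' < q' * M + M := by omega
        _ = (q' + 1) * M := by ring
        _ ≤ q * M := Nat.mul_le_mul_right M (by omega)
      omega
  · rintro (hq | ⟨rfl, hr2⟩)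
    · calc q * M + r < q * M + M := by omega
      _ = (q + 1) * M := by ring
      _ ≤ q' * M := Nat.mul_le_mul_right M (by omega)
      _ ≤ q' * M + r' := by omega
    · omega

lemma lt_block {M q r Q : ℕ} (hr : r < M) (h : q < Q) : q * M + r < Q * M := by
  calc q * M + r < q * M + M := by omega
  _ = (q + 1) * M := by ring
  _ ≤ Q * M := Nat.mul_le_mul_right M (by omega)

lemma catInf_lt (u : List A) (w : ℕ → A) (n : ℕ) (h : n < u.length) :
    catInf u w n = u.get ⟨n, h⟩ := by
  simp [catInf, h]

lemma catInf_ge (u : List A) (w : ℕ → A) (n : ℕ) (h : u.length ≤ n) :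
    catInf u w n = w (n - u.length) := by
  simp [catInf, Nat.not_lt.mpr h]

lemma wpow_eval (u : List A) (hu : u ≠ []) (q r : ℕ) (hr : r < u.length) :
    wpow u hu (q * u.length + r) = u.get ⟨r, hr⟩ := by
  simp only [wpow]
  congr 1
  apply Fin.ext
  show (q * u.length + r) % u.length = r
  rw [Nat.mul_comm, Nat.mul_add_mod, Nat.mod_eq_of_lt hr]

lemma fpow_succ (u : List A) (ℓ : ℕ) : fpow u (ℓ+1) = u ++ fpow u ℓ := by
  show (List.replicate (ℓ+1) u).flatten = _
  rw [List.replicate_succ, List.flatten_cons]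
  rfl

lemma fpow_length (u : List A) (ℓ : ℕ) : (fpow u ℓ).length = ℓ * u.length := by
  induction ℓ with
  | zero => simp [fpow]
  | succ ℓ ih =>
      rw [fpow_succ, List.length_append, ih]
      ring

lemma fpow_getElem (u : List A) (ℓ q r : ℕ) (hq : q < ℓ) (hr : r < u.length)
    (h : q * u.length + r < (fpow u ℓ).length) :
    (fpow u ℓ)[q * u.length + r] = u[r] := by
  induction ℓ generalizing q with
  | zero => omega
  | succ ℓ ih =>
      rcases Nat.eq_zero_or_pos q with rfl | hqpos
      · simp only [fpow_succ] at h ⊢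
        rw [List.getElem_append_left (by simpa using hr)]
        congr 1
        omega
      · have hq' : q - 1 < ℓ := by omega
        have harith : q * u.length + r = u.length + ((q-1) * u.length + r) := by
          have hh : q = (q - 1) + 1 := by omega
          calc q * u.length + r = ((q-1)+1) * u.length + r := by rw [← hh]
          _ = u.length + ((q-1) * u.length + r) := by ring
        have hlen : (q-1) * u.length + r < (fpow u ℓ).length := by
          rw [fpow_length]
          calc (q-1) * u.length + r < ((q-1)+1) * u.length := lt_block hr (by omega)
          _ ≤ ℓ * u.length := Nat.mul_le_mul_right _ (by omega)
        have := ih (q-1) hq' hlen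
        rw [← this]
        simp only [fpow_succ, harith] at h ⊢
        rw [List.getElem_append_right (by omega)]
        congr 1
        omega

lemma fpow_ne_nil (u : List A) (hu : u ≠ []) (ℓ : ℕ) (hℓ : 0 < ℓ) : fpow u ℓ ≠ [] := by
  intro hcon
  have h1 := fpow_length u ℓ
  rw [hcon] at h1
  simp at h1
  rcases h1 with h | h
  · omega
  · exact hu h

/-! ### Semigroup power lemmas -/

lemma mpow_add {S T : Type} (M : OmegaSG S T) (s : S) (x y : ℕ) :
    mpow M.mul s (x + y + 1) = M.mul (mpow M.mul s x) (mpow M.mul s y) := by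
  induction y with
  | zero => rfl
  | succ y ih =>
      have h1 : x + (y + 1) + 1 = (x + y + 1) + 1 := by omega
      rw [h1]
      show M.mul (mpow M.mul s (x + y + 1)) s = _
      rw [ih, M.mul_assoc]
      rfl

lemma mpow_idem {S T : Type} (M : OmegaSG S T) (s : S) (e : ℕ)
    (he : M.mul (mpow M.mul s e) (mpow M.mul s e) = mpow M.mul s e) (m : ℕ) :
    mpow M.mul s (m * (e + 1) + e) = mpow M.mul s e := by
  induction m with
  | zero => simp
  | succ m ih =>
      have h1 : (m + 1) * (e + 1) + e = (m * (e+1) + e) + e + 1 := by ring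
      rw [h1, mpow_add, ih, he]

lemma alphaP_fpow {Sp Si : Type} (M : OmegaSG Sp Si) (αp : List A → Sp)
    (hp : ∀ u v : List A, u ≠ [] → v ≠ [] → αp (u ++ v) = M.mul (αp u) (αp v))
    (u : List A) (hu : u ≠ []) (n : ℕ) :
    αp (fpow u (n + 1)) = mpow M.mul (αp u) n := by
  induction n with
  | zero =>
      rw [fpow_succ]
      show αp (u ++ (List.replicate 0 u).flatten) = αp u
      simp
  | succ n ih =>
      have hexp : fpow u (n+2) = u ++ fpow u (n+1) := fpow_succ u (n+1)
      rw [hexp, hp _ _ hu (fpow_ne_nil u hu _ (by omega)), ih,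
        show n + 1 = 0 + n + 1 from by omega, mpow_add M (αp u) 0 n]
      rfl
/-! ### The combination lemma -/

lemma combine_EFle (x₁ x₂ y₁ y₂ : List A) (wv : ℕ → A)
    (hx₁ : 0 < x₁.length) (hx₂ : 0 < x₂.length)
    (hy₁ : y₁ ≠ []) (hy₂ : 0 < y₂.length)
    (k ℓ : ℕ) (hℓ : k + 1 ≤ ℓ)
    (hx : ∀ a b : ℕ, a + b ≤ k → EFle x₁.get x₂.get a b)
    (hy : ∀ a b : ℕ, a + b ≤ k → EFle y₁.get y₂.get a b)
    (halph : ∀ n : ℕ, ∃ j : Fin y₁.length, y₁.get j = wv n)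
    (a b : ℕ) (hab : a + b ≤ k) :
    EFle (catInf x₁ (wpow y₁ hy₁)) (catInf x₂ (catInf (fpow y₂ ℓ) wv)) a b := by
  classical
  have hm₁ : 0 < y₁.length := List.length_pos_iff.mpr hy₁
  -- evaluation lemmas
  have hW₁X : ∀ v : Fin x₁.length, catInf x₁ (wpow y₁ hy₁) (v : ℕ) = x₁.get v := by
    intro v; rw [catInf_lt x₁ _ _ v.isLt]
  have hW₁Y : ∀ (q : ℕ) (r : Fin y₁.length),
      catInf x₁ (wpow y₁ hy₁) (x₁.length + (q * y₁.length + (r : ℕ))) = y₁.get r := by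
    intro q r
    rw [catInf_ge x₁ _ _ (Nat.le_add_right _ _), Nat.add_sub_cancel_left,
      wpow_eval y₁ hy₁ q r r.isLt]
  have hW₂X : ∀ v : Fin x₂.length,
      catInf x₂ (catInf (fpow y₂ ℓ) wv) (v : ℕ) = x₂.get v := by
    intro v; rw [catInf_lt x₂ _ _ v.isLt]
  have hW₂Y : ∀ (q : ℕ) (r : Fin y₂.length), q < ℓ →
      catInf x₂ (catInf (fpow y₂ ℓ) wv) (x₂.length + (q * y₂.length + (r : ℕ))) = y₂.get r := by
    intro q r hq
    rw [catInf_ge x₂ _ _ (Nat.le_add_right _ _), Nat.add_sub_cancel_left]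
    have hlt : q * y₂.length + (r : ℕ) < (fpow y₂ ℓ).length := by
      rw [fpow_length]; exact lt_block r.isLt hq
    rw [catInf_lt _ _ _ hlt]
    have := fpow_getElem y₂ ℓ q r hq r.isLt hlt
    rw [List.get_eq_getElem, List.get_eq_getElem]
    exact this
  have hW₂T : ∀ p : ℕ,
      catInf x₂ (catInf (fpow y₂ ℓ) wv) (x₂.length + (ℓ * y₂.length + p)) = wv p := by
    intro p
    rw [catInf_ge x₂ _ _ (Nat.le_add_right _ _), Nat.add_sub_cancel_left,
      catInf_ge _ _ _ (by rw [fpow_length]; exact Nat.le_add_right _ _), fpow_length]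
    congr 1; omega
  intro d
  -- X-part strategy
  set dX : Fin a → Fin x₁.length :=
    (fun i => if h : d i < x₁.length then ⟨d i, h⟩ else ⟨0, hx₁⟩) with hdX
  obtain ⟨fX, hfX⟩ := hx a b hab dX
  -- copy decompositions
  set cp : ℕ → ℕ := (fun n => (n - x₁.length) / y₁.length) with hcp
  set off : ℕ → ℕ := (fun n => (n - x₁.length) % y₁.length) with hoff
  -- per-copy witness columns
  set Dq : ℕ → Fin a → Fin y₁.length :=
    (fun q i => if (x₁.length ≤ d i ∧ cp (d i) = q)
      then ⟨off (d i), Nat.mod_lt _ hm₁⟩ else ⟨0, hm₁⟩) with hDq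
  choose F hF using fun q => hy a b hab (Dq q)
  -- copy bookkeeping
  set Tfin : Finset ℕ := Finset.image (fun i => cp (d i)) Finset.univ with hTfin
  set B : ℕ := (Tfin.sup id) + 1 with hB
  set P : ℕ → Prop := (fun j => j ∈ Tfin ∨ B ≤ j) with hP
  have hPinf : (setOf P).Infinite :=
    Set.Infinite.mono (fun j (hj : j ∈ Set.Ici B) => (Or.inr hj : P j)) (Set.Ici_infinite B)
  have hρmono : ∀ {u v : ℕ}, Nat.nth P u < Nat.nth P v ↔ u < v :=
    fun {u v} => Nat.nth_lt_nth hPinf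
  have hρc : ∀ q ∈ Tfin, Nat.nth P (Nat.count P q) = q :=
    fun q hq => Nat.nth_count (Or.inl hq)
  have hcmem : ∀ i : Fin a, cp (d i) ∈ Tfin := by
    intro i; rw [hTfin]; exact Finset.mem_image.mpr ⟨i, Finset.mem_univ i, rfl⟩
  have hcltℓ : ∀ q ∈ Tfin, Nat.count P q < ℓ := by
    intro q hq
    have hsub : Finset.filter (fun m => P m) (Finset.range q) ⊆ Tfin := by
      intro m hm
      rw [Finset.mem_filter, Finset.mem_range] at hm
      rcases hm.2 with h | h
      · exact h
      · exfalso
        have hqB : q ≤ Tfin.sup id := Finset.le_sup (f := id) hq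
        omega
    have h1 : Nat.count P q ≤ Tfin.card := by
      rw [Nat.count_eq_card_filter_range]
      exact Finset.card_le_card hsub
    have h2 : Tfin.card ≤ a := by
      rw [hTfin]
      calc (Finset.image (fun i => cp (d i)) Finset.univ).card
          ≤ (Finset.univ : Finset (Fin a)).card := Finset.card_image_le
      _ = a := by simp
    omega
  -- the existential witness tuple
  set f : Fin a → ℕ := (fun i =>
    if d i < x₁.length then ((fX i : ℕ))
    else x₂.length + (Nat.count P (cp (d i)) * y₂.length + (F (cp (d i)) i : ℕ))) with hf
  refine ⟨f, ?_⟩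
  intro e'
  -- adversary decompositions
  set E'X : Fin b → Fin x₂.length :=
    (fun j => if h : e' j < x₂.length then ⟨e' j, h⟩ else ⟨0, hx₂⟩) with hE'X
  obtain ⟨eX, hXlet, hXord⟩ := hfX E'X
  set cp₂ : ℕ → ℕ := (fun n => (n - x₂.length) / y₂.length) with hcp₂
  set off₂ : ℕ → ℕ := (fun n => (n - x₂.length) % y₂.length) with hoff₂
  set E' : ℕ → Fin b → Fin y₂.length := (fun q j =>
    if (x₂.length ≤ e' j ∧ e' j < x₂.length + ℓ * y₂.length ∧ Nat.nth P (cp₂ (e' j)) = q)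
    then ⟨off₂ (e' j), Nat.mod_lt _ hy₂⟩ else ⟨0, hy₂⟩) with hE'
  choose E hE using fun q => hF q (E' q)
  choose pk hpk using halph
  set e : Fin b → ℕ := (fun j =>
    if e' j < x₂.length then ((eX j : ℕ))
    else if e' j < x₂.length + ℓ * y₂.length
    then x₁.length + (Nat.nth P (cp₂ (e' j)) * y₁.length + (E (Nat.nth P (cp₂ (e' j))) j : ℕ))
    else x₁.length + (Nat.nth P (ℓ + (e' j - (x₂.length + ℓ * y₂.length))) * y₁.length
      + (pk (e' j - (x₂.length + ℓ * y₂.length)) : ℕ))) with he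
  -- slot descriptions
  have desc : ∀ s : Fin b ⊕ Fin a,
      (Sum.elim e d s = ((Sum.elim eX dX s : Fin x₁.length) : ℕ) ∧
        Sum.elim e' f s = ((Sum.elim E'X fX s : Fin x₂.length) : ℕ))
    ∨ (∃ Q₂ : ℕ, Q₂ < ℓ ∧
        Sum.elim e d s = x₁.length + ((Nat.nth P Q₂) * y₁.length
          + ((Sum.elim (E (Nat.nth P Q₂)) (Dq (Nat.nth P Q₂)) s : Fin y₁.length) : ℕ)) ∧
        Sum.elim e' f s = x₂.length + (Q₂ * y₂.length
          + ((Sum.elim (E' (Nat.nth P Q₂)) (F (Nat.nth P Q₂)) s : Fin y₂.length) : ℕ)))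
    ∨ (∃ p : ℕ,
        Sum.elim e d s = x₁.length + ((Nat.nth P (ℓ + p)) * y₁.length + (pk p : ℕ)) ∧
        Sum.elim e' f s = x₂.length + (ℓ * y₂.length + p)) := by
    rintro (j | i)
    · simp only [Sum.elim_inl]
      by_cases h1 : e' j < x₂.length
      · left
        constructor
        · rw [he]
          simp only [if_pos h1]
        · rw [hE'X]
          simp only [dif_pos h1]
      · by_cases h2 : e' j < x₂.length + ℓ * y₂.length
        · right; left
          refine ⟨cp₂ (e' j), ?_, ?_, ?_⟩
          · rw [hcp₂]
            exact (Nat.div_lt_iff_lt_mul hy₂).mpr (by omega)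
          · rw [he]
            simp only [if_neg h1, if_pos h2, Sum.elim_inl]
          · have hcond : (x₂.length ≤ e' j ∧ e' j < x₂.length + ℓ * y₂.length ∧
                Nat.nth P (cp₂ (e' j)) = Nat.nth P (cp₂ (e' j))) := ⟨by omega, h2, rfl⟩
            have hE'val : E' (Nat.nth P (cp₂ (e' j))) j = ⟨off₂ (e' j), Nat.mod_lt _ hy₂⟩ :=
              if_pos hcond
            rw [hE'val]
            have hdm : cp₂ (e' j) * y₂.length + off₂ (e' j) = e' j - x₂.length := by
              rw [hcp₂, hoff₂, Nat.mul_comm]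
              exact Nat.div_add_mod _ _
            simp only []
            omega
        · right; right
          refine ⟨e' j - (x₂.length + ℓ * y₂.length), ?_, by omega⟩
          rw [he]
          simp only [if_neg h1, if_neg h2]
    · simp only [Sum.elim_inr]
      by_cases hdi : d i < x₁.length
      · left
        constructor
        · rw [hdX]; simp only [dif_pos hdi]
        · rw [hf]; simp only [if_pos hdi]
      · right; left
        have hmem := hcmem i
        have hρcq : Nat.nth P (Nat.count P (cp (d i))) = cp (d i) := hρc _ hmem
        refine ⟨Nat.count P (cp (d i)), hcltℓ _ hmem, ?_, ?_⟩
        · rw [hρcq]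
          have hDval : Dq (cp (d i)) i = ⟨off (d i), Nat.mod_lt _ hm₁⟩ :=
            if_pos (⟨by omega, rfl⟩ : (x₁.length ≤ d i ∧ cp (d i) = cp (d i)))
          rw [hDval]
          have hdm : cp (d i) * y₁.length + off (d i) = d i - x₁.length := by
            rw [hcp, hoff, Nat.mul_comm]
            exact Nat.div_add_mod _ _
          simp only []
          omega
        · rw [hρcq, hf]
          simp only [if_neg hdi]
  -- letters
  refine ⟨e, ?_, ?_⟩
  · intro s
    rcases desc s with ⟨h1, h2⟩ | ⟨Q₂, hQ, h1, h2⟩ | ⟨p, h1, h2⟩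
    · rw [h1, h2, hW₁X, hW₂X]
      exact hXlet s
    · rw [h1, h2, hW₁Y, hW₂Y _ _ hQ]
      exact (hE (Nat.nth P Q₂)).1 s
    · rw [h1, h2, hW₁Y, hW₂T]
      exact hpk p
  -- orders
  · intro s s'
    rcases desc s with ⟨h1, h2⟩ | ⟨Q₂, hQ, h1, h2⟩ | ⟨p, h1, h2⟩ <;>
      rcases desc s' with ⟨h1', h2'⟩ | ⟨Q₂', hQ', h1', h2'⟩ | ⟨p', h1', h2'⟩ <;>
      rw [h1, h2, h1', h2']
    -- X X
    · have hq := hXord s s'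
      simp only [Fin.lt_def] at hq
      exact hq
    -- X Y
    · exact iff_of_true
        (lt_of_lt_of_le (Sum.elim eX dX s).isLt (Nat.le_add_right _ _))
        (lt_of_lt_of_le (Sum.elim E'X fX s).isLt (Nat.le_add_right _ _))
    -- X T
    · exact iff_of_true
        (lt_of_lt_of_le (Sum.elim eX dX s).isLt (Nat.le_add_right _ _))
        (lt_of_lt_of_le (Sum.elim E'X fX s).isLt (Nat.le_add_right _ _))
    -- Y X
    · exact iff_of_false
        (Nat.not_lt.mpr (le_trans (le_of_lt (Sum.elim eX dX s').isLt) (Nat.le_add_right _ _)))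
        (Nat.not_lt.mpr (le_trans (le_of_lt (Sum.elim E'X fX s').isLt) (Nat.le_add_right _ _)))
    -- Y Y
    · by_cases hqq : Q₂ = Q₂'
      · subst hqq
        rw [Nat.add_lt_add_iff_left, Nat.add_lt_add_iff_left,
          Nat.add_lt_add_iff_left, Nat.add_lt_add_iff_left]
        have hq := (hE (Nat.nth P Q₂)).2 s s'
        simp only [Fin.lt_def] at hq
        exact hq
      · rw [Nat.add_lt_add_iff_left, Nat.add_lt_add_iff_left,
          blockLt (Sum.elim (E (Nat.nth P Q₂)) (Dq (Nat.nth P Q₂)) s).isLt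
            (Sum.elim (E (Nat.nth P Q₂')) (Dq (Nat.nth P Q₂')) s').isLt,
          blockLt (Sum.elim (E' (Nat.nth P Q₂)) (F (Nat.nth P Q₂)) s).isLt
            (Sum.elim (E' (Nat.nth P Q₂')) (F (Nat.nth P Q₂')) s').isLt]
        rcases lt_trichotomy Q₂ Q₂' with h | h | h
        · exact iff_of_true (Or.inl (hρmono.mpr h)) (Or.inl h)
        · exact absurd h hqq
        · refine iff_of_false ?_ ?_
          · rintro (hc | ⟨hc, _⟩)
            · have := hρmono.mp hc; omega
            · have := hρmono.mpr h; omega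
          · rintro (hc | ⟨hc, _⟩) <;> omega
    -- Y T
    · refine iff_of_true ?_ ?_
      · exact Nat.add_lt_add_left ((blockLt
          (Sum.elim (E (Nat.nth P Q₂)) (Dq (Nat.nth P Q₂)) s).isLt (pk p').isLt).mpr
          (Or.inl (hρmono.mpr (by omega)))) _
      · exact Nat.add_lt_add_left
          (lt_of_lt_of_le (lt_block (Sum.elim (E' (Nat.nth P Q₂)) (F (Nat.nth P Q₂)) s).isLt hQ)
            (Nat.le_add_right _ _)) _
    -- T X
    · exact iff_of_false
        (Nat.not_lt.mpr (le_trans (le_of_lt (Sum.elim eX dX s').isLt) (Nat.le_add_right _ _)))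
        (Nat.not_lt.mpr (le_trans (le_of_lt (Sum.elim E'X fX s').isLt) (Nat.le_add_right _ _)))
    -- T Y
    · refine iff_of_false (Nat.lt_asymm ?_) (Nat.lt_asymm ?_)
      · exact Nat.add_lt_add_left ((blockLt
          (Sum.elim (E (Nat.nth P Q₂')) (Dq (Nat.nth P Q₂')) s').isLt (pk p).isLt).mpr
          (Or.inl (hρmono.mpr (by omega)))) _
      · exact Nat.add_lt_add_left
          (lt_of_lt_of_le (lt_block (Sum.elim (E' (Nat.nth P Q₂')) (F (Nat.nth P Q₂')) s').isLt hQ')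
            (Nat.le_add_right _ _)) _
    -- T T
    · rcases lt_trichotomy p p' with h | h | h
      · refine iff_of_true ?_ ?_
        · exact Nat.add_lt_add_left ((blockLt (pk p).isLt (pk p').isLt).mpr
            (Or.inl (hρmono.mpr (by omega)))) _
        · rw [Nat.add_lt_add_iff_left, Nat.add_lt_add_iff_left]; exact h
      · subst h
        exact iff_of_false (lt_irrefl _) (lt_irrefl _)
      · refine iff_of_false (Nat.lt_asymm ?_) (Nat.lt_asymm ?_)
        · exact Nat.add_lt_add_left ((blockLt (pk p').isLt (pk p).isLt).mpr
            (Or.inl (hρmono.mpr (by omega)))) _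
        · rw [Nat.add_lt_add_iff_left, Nat.add_lt_add_iff_left]; exact h
theorem sigma2_saturation_correct' (A Sp Si : Type) (M : OmegaSG Sp Si)
    (hSp : Finite Sp) (hSi : Finite Si)
    (αp : List A → Sp) (αi : (ℕ → A) → Si)
    (hp : ∀ u v : List A, u ≠ [] → v ≠ [] → αp (u ++ v) = M.mul (αp u) (αp v))
    (hmix : ∀ (u : List A), u ≠ [] → ∀ w : ℕ → A, αi (catInf u w) = M.act (αp u) (αi w))
    (hpow : ∀ (u : List A) (hu : u ≠ []), αi (wpow u hu) = M.ipow (αp u))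
    (hacF : ∀ u v : List A, u ≠ [] → v ≠ [] → αp u = αp v → alphFin u = alphFin v)
    (hacI : ∀ w w' : ℕ → A, αi w = αi w' → alphInf w = alphInf w')
    (e : ℕ) (he : ∀ s : Sp, M.mul (mpow M.mul s e) (mpow M.mul s e) = mpow M.mul s e)
    (r₁ r₂ s₁ s₂ : Sp) (t₂ : Si)
    (hr : (r₁, r₂) ∈ C22Fin αp) (hs : (s₁, s₂) ∈ C22Fin αp)
    (ht : ∃ w : ℕ → A, αi w = t₂)
    (halph : alphS αp s₁ = alphSi αi t₂) :
    (M.act r₁ (M.ipow s₁), M.act (M.mul r₂ (mpow M.mul s₂ e)) t₂) ∈ C22Inf αi := by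
  intro k hk
  obtain ⟨x₁, x₂, hx₁ne, hx₂ne, hax₁, hax₂, hxle⟩ := hr k hk
  obtain ⟨y₁, y₂, hy₁ne, hy₂ne, hay₁, hay₂, hyle⟩ := hs k hk
  obtain ⟨wv, hwv⟩ := ht
  set ℓ : ℕ := (k + 1) * (e + 1) with hℓdef
  have hℓpos : 0 < ℓ := by positivity
  have hy₂len : 0 < y₂.length := List.length_pos_iff.mpr hy₂ne
  have hfne : fpow y₂ ℓ ≠ [] := fpow_ne_nil y₂ hy₂ne ℓ hℓpos
  refine ⟨catInf x₁ (wpow y₁ hy₁ne), catInf x₂ (catInf (fpow y₂ ℓ) wv), ?_, ?_, ?_⟩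
  · show αi _ = M.act r₁ (M.ipow s₁)
    rw [hmix x₁ hx₁ne, hpow y₁ hy₁ne, hax₁, hay₁]
  · show αi _ = M.act (M.mul r₂ (mpow M.mul s₂ e)) t₂
    rw [hmix x₂ hx₂ne, hmix _ hfne, hwv, hax₂]
    have hfp : αp (fpow y₂ ℓ) = mpow M.mul s₂ e := by
      have h1 : ℓ = (k * (e + 1) + e) + 1 := by rw [hℓdef]; ring
      rw [h1, alphaP_fpow M αp hp y₂ hy₂ne, hay₂, mpow_idem M s₂ e (he s₂)]
    rw [hfp, ← M.act_assoc]
  · apply efle_leInf k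
    intro a b hab
    have hx : ∀ a b : ℕ, a + b ≤ k → EFle x₁.get x₂.get a b := fun a b hab =>
      leFin_to_EFle k a b hab x₁ x₂ (List.length_pos_iff.mpr hx₁ne) (List.length_pos_iff.mpr hx₂ne) hxle
    have hy : ∀ a b : ℕ, a + b ≤ k → EFle y₁.get y₂.get a b := fun a b hab =>
      leFin_to_EFle k a b hab y₁ y₂ (List.length_pos_iff.mpr hy₁ne) (List.length_pos_iff.mpr hy₂ne) hyle
    have halph' : ∀ n : ℕ, ∃ j : Fin y₁.length, y₁.get j = wv n := by
      intro n
      have h1 : wv n ∈ alphSi αi t₂ := ⟨wv, hwv, n, rfl⟩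
      rw [← halph] at h1
      obtain ⟨u, hune, hu, hmem⟩ := h1
      have h2 : alphFin u = alphFin y₁ := hacF u y₁ hune hy₁ne (by rw [hu, hay₁])
      have h3 : wv n ∈ y₁ := by
        have : wv n ∈ alphFin y₁ := h2 ▸ hmem
        exact this
      exact List.mem_iff_get.mp h3
    exact combine_EFle x₁ x₂ y₁ y₂ wv (List.length_pos_iff.mpr hx₁ne) (List.length_pos_iff.mpr hx₂ne)
      hy₁ne hy₂len k ℓ (Nat.le_mul_of_pos_right (k+1) (by omega)) hx hy halph' a b hab

/-- **Correctness of the `Σ₂`-saturation.** For an alphabet-compatible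
morphism `α` into a finite ω-semigroup: if `(r₁,r₂), (s₁,s₂) ∈ C_{2,2}[α₊]`,
`t₂ ∈ α(A^∞)` and `alph s₁ = alph t₂`, then
`(r₁ s₁^∞, r₂ s₂^ω t₂) ∈ C_{2,2}[α_∞]`. -/
theorem sigma2_saturation_correct (A Sp Si : Type) (M : OmegaSG Sp Si)
    (hSp : Finite Sp) (hSi : Finite Si)
    (αp : List A → Sp) (αi : (ℕ → A) → Si)
    (hp : ∀ u v : List A, u ≠ [] → v ≠ [] → αp (u ++ v) = M.mul (αp u) (αp v))
    (hmix : ∀ (u : List A), u ≠ [] → ∀ w : ℕ → A, αi (catInf u w) = M.act (αp u) (αi w))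
    (hpow : ∀ (u : List A) (hu : u ≠ []), αi (wpow u hu) = M.ipow (αp u))
    (hacF : ∀ u v : List A, u ≠ [] → v ≠ [] → αp u = αp v → alphFin u = alphFin v)
    (hacI : ∀ w w' : ℕ → A, αi w = αi w' → alphInf w = alphInf w')
    (e : ℕ) (he : ∀ s : Sp, M.mul (mpow M.mul s e) (mpow M.mul s e) = mpow M.mul s e)
    (r₁ r₂ s₁ s₂ : Sp) (t₂ : Si)
    (hr : (r₁, r₂) ∈ C22Fin αp) (hs : (s₁, s₂) ∈ C22Fin αp)
    (ht : ∃ w : ℕ → A, αi w = t₂)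
    (halph : alphS αp s₁ = alphSi αi t₂) :
    (M.act r₁ (M.ipow s₁), M.act (M.mul r₂ (mpow M.mul s₂ e)) t₂) ∈ C22Inf αi := by
  exact sigma2_saturation_correct' A Sp Si M hSp hSi αp αi hp hmix hpow hacF hacI
    e he r₁ r₂ s₁ s₂ t₂ hr hs ht halph

end QAH
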